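/- For the graph G_{t,ω} (t ≥ 2, ω ≥ 3), the local adjacency metric dimension of G_{t,ω} equals t(ω−2). -/

import Mathlib

open SimpleGraph

variable {V : Type*} [Fintype V] [DecidableEq V]

/-- `S` is a local resolving set of `G`. -/
def IsLocalResolving (G : SimpleGraph V) (S : Finset V) : Prop :=
  ∀ u v : V, G.Adj u v → u ∉ S → v ∉ S → ∃ w ∈ S, G.dist u w ≠ G.dist v w

/-- The local metric dimension of `G`. -/
noncomputable def dimL (G : SimpleGraph V) : ℕ :=
  sInf {k | ∃ S : Finset V, S.card = k ∧ IsLocalResolving G S}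

/-- `S` is a local adjacency resolving set of `G`. -/
def IsLocalAdjResolving (G : SimpleGraph V) (S : Finset V) : Prop :=
  ∀ u v : V, G.Adj u v → u ∉ S → v ∉ S → ∃ w ∈ S, Xor' (G.Adj w u) (G.Adj w v)

/-- The local adjacency metric dimension of `G`. -/
noncomputable def dimAL (G : SimpleGraph V) : ℕ :=
  sInf {k | ∃ S : Finset V, S.card = k ∧ IsLocalAdjResolving G S}

/-- `S` is a resolving set of `G`. -/
def IsResolving (G : SimpleGraph V) (S : Finset V) : Prop :=
  ∀ u v : V, u ≠ v → u ∉ S → v ∉ S → ∃ w ∈ S, G.dist u w ≠ G.dist v w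

/-- The metric dimension of `G`. -/
noncomputable def dimM (G : SimpleGraph V) : ℕ :=
  sInf {k | ∃ S : Finset V, S.card = k ∧ IsResolving G S}

/-- `S` is an adjacency resolving set of `G`. -/
def IsAdjResolving (G : SimpleGraph V) (S : Finset V) : Prop :=
  ∀ u v : V, u ≠ v → u ∉ S → v ∉ S → ∃ w ∈ S, Xor' (G.Adj w u) (G.Adj w v)

/-- The adjacency metric dimension of `G`. -/
noncomputable def dimA (G : SimpleGraph V) : ℕ :=
  sInf {k | ∃ S : Finset V, S.card = k ∧ IsAdjResolving G S}

/-- The graph obtained from `t` disjoint copies of `K_ω` by identifying one chosen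
vertex of each copy into a single vertex `none`. The vertex `some (i, j)` is the
`j`-th non-hub vertex of the `i`-th copy. -/
def Gtw (t ω : ℕ) : SimpleGraph (Option (Fin t × Fin (ω - 1))) where
  Adj a b := a ≠ b ∧ ∀ p q, a = some p → b = some q → p.1 = q.1
  symm := by
    constructor
    rintro a b ⟨h1, h2⟩
    exact ⟨h1.symm, fun p q hp hq => (h2 q p hq hp).symm⟩
  loopless := by
    constructor
    rintro a ⟨h, -⟩
    exact h rfl


lemma gtw_adj_some_none {t ω : ℕ} (p : Fin t × Fin (ω - 1)) :
    (Gtw t ω).Adj (some p) none := by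
  refine ⟨by simp, ?_⟩
  rintro a b - h
  cases h

lemma gtw_adj_some_some {t ω : ℕ} (p q : Fin t × Fin (ω - 1)) :
    (Gtw t ω).Adj (some p) (some q) ↔ p ≠ q ∧ p.1 = q.1 := by
  constructor
  · rintro ⟨h1, h2⟩
    exact ⟨fun h => h1 (by rw [h]), h2 p q rfl rfl⟩
  · rintro ⟨h1, h2⟩
    refine ⟨by simpa using h1, ?_⟩
    intro a b ha hb
    obtain rfl := Option.some_injective _ ha
    obtain rfl := Option.some_injective _ hb
    exact h2

theorem dimAL_Gtw (t ω : ℕ) (ht : 2 ≤ t) (hω : 3 ≤ ω) :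
    dimAL (Gtw t ω) = t * (ω - 2) := by
  classical
  have hn : 2 ≤ ω - 1 := by omega
  haveI : Nontrivial (Fin t) := Fin.nontrivial_iff_two_le.mpr ht
  set j0 : Fin (ω - 1) := ⟨0, by omega⟩ with hj0
  set j1 : Fin (ω - 1) := ⟨1, by omega⟩ with hj1
  have hj01 : j1 ≠ j0 := by
    simp [hj0, hj1, Fin.ext_iff]
  set S : Finset (Option (Fin t × Fin (ω - 1))) :=
    (Finset.univ ×ˢ ({j0}ᶜ : Finset (Fin (ω - 1)))).image some with hS
  have hmemS : ∀ p : Fin t × Fin (ω - 1), some p ∈ S ↔ p.2 ≠ j0 := by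
    intro p
    simp [hS, Finset.mem_product]
  have hnoneS : (none : Option (Fin t × Fin (ω - 1))) ∉ S := by
    simp [hS]
  have hScard : S.card = t * (ω - 2) := by
    rw [hS, Finset.card_image_of_injective _ (Option.some_injective _),
        Finset.card_product, Finset.card_univ, Finset.card_compl,
        Finset.card_singleton, Fintype.card_fin, Fintype.card_fin]
    have h2 : ω - 1 - 1 = ω - 2 := by omega
    rw [h2]
  have hSres : IsLocalAdjResolving (Gtw t ω) S := by
    intro u v hadj hu hv
    have hchar : ∀ a : Option (Fin t × Fin (ω - 1)), a ∉ S →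
        a = none ∨ ∃ i, a = some (i, j0) := by
      rintro (_ | ⟨i, j⟩) ha
      · exact Or.inl rfl
      · right
        refine ⟨i, ?_⟩
        have : ¬ (i, j).2 ≠ j0 := fun h => ha ((hmemS _).mpr h)
        simp only [ne_eq, not_not] at this
        simp [this]
    have key : ∀ q : Fin t × Fin (ω - 1),
        ∃ w ∈ S, Xor' ((Gtw t ω).Adj w none) ((Gtw t ω).Adj w (some q)) := by
      intro q
      obtain ⟨i', hi'⟩ := exists_ne q.1
      refine ⟨some (i', j1), (hmemS _).mpr hj01, Or.inl ⟨gtw_adj_some_none _, ?_⟩⟩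
      rw [gtw_adj_some_some]
      rintro ⟨-, h⟩
      exact hi' h
    rcases hchar u hu with rfl | ⟨i, rfl⟩ <;> rcases hchar v hv with rfl | ⟨i', rfl⟩
    · exact absurd rfl hadj.ne
    · exact key (i', j0)
    · obtain ⟨w, hw, hx⟩ := key (i, j0)
      exact ⟨w, hw, hx.symm⟩
    · rw [gtw_adj_some_some] at hadj
      exact absurd (Prod.ext hadj.2 rfl) hadj.1
  apply le_antisymm
  · exact Nat.sInf_le ⟨S, hScard, hSres⟩
  · refine le_csInf ⟨t * (ω - 2), S, hScard, hSres⟩ ?_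
    rintro k ⟨T, rfl, hT⟩
    set B : Finset (Fin t × Fin (ω - 1)) :=
      Finset.univ.filter (fun p => some p ∉ T) with hB
    set A : Finset (Fin t × Fin (ω - 1)) :=
      Finset.univ.filter (fun p => some p ∈ T) with hA
    have hAB : A.card + B.card = t * (ω - 1) := by
      have := Finset.card_filter_add_card_filter_not
        (s := (Finset.univ : Finset (Fin t × Fin (ω - 1))))
        (p := fun p => some p ∈ T)
      simpa [hA, hB, Finset.card_univ] using this
    have hBcard : B.card ≤ t := by
      have hinj : Set.InjOn Prod.fst (B : Set (Fin t × Fin (ω - 1))) := by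
        intro p hp q hq hpq
        by_contra hne
        simp only [hB, Finset.coe_filter, Set.mem_setOf_eq] at hp hq
        have hadj : (Gtw t ω).Adj (some p) (some q) :=
          (gtw_adj_some_some p q).mpr ⟨hne, hpq⟩
        obtain ⟨w, hw, hx⟩ := hT _ _ hadj hp.2 hq.2
        rcases w with _ | r
        · rcases hx with ⟨-, h⟩ | ⟨-, h⟩ <;>
            exact h (gtw_adj_some_none _).symm
        · by_cases hr : r.1 = p.1
          · have hrp : r ≠ p := fun h => hp.2 (h ▸ hw)
            have hrq : r ≠ q := fun h => hq.2 (h ▸ hw)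
            rcases hx with ⟨-, h⟩ | ⟨-, h⟩
            · exact h ((gtw_adj_some_some r q).mpr ⟨hrq, hr.trans hpq⟩)
            · exact h ((gtw_adj_some_some r p).mpr ⟨hrp, hr⟩)
          · rcases hx with ⟨h, -⟩ | ⟨h, -⟩
            · exact hr ((gtw_adj_some_some r p).mp h).2
            · exact hr (((gtw_adj_some_some r q).mp h).2.trans hpq.symm)
      calc B.card = (B.image Prod.fst).card := (Finset.card_image_of_injOn hinj).symm
        _ ≤ (Finset.univ : Finset (Fin t)).card := Finset.card_le_card (Finset.subset_univ _)
        _ = t := by simp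
    have hAcard : A.card ≤ T.card := by
      have : A.image some ⊆ T := by
        intro x hx
        simp only [Finset.mem_image] at hx
        obtain ⟨p, hp, rfl⟩ := hx
        exact (Finset.mem_filter.mp hp).2
      calc A.card = (A.image some).card :=
            (Finset.card_image_of_injective _ (Option.some_injective _)).symm
        _ ≤ T.card := Finset.card_le_card this
    have heq : t * (ω - 1) = t * (ω - 2) + t := by
      have : ω - 1 = (ω - 2) + 1 := by omega
      rw [this, Nat.mul_add, Nat.mul_one]
    omega
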